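/- If G is a finite group possessing a proper non-trivial ICΦ-subgroup H, then G is not simple. -/

import Mathlib

/-- `H` is an `ICΦ`-subgroup of `G` if `H ∩ [H,G] ≤ Φ(H)`. -/
def IsICPhi {G : Type*} [Group G] (H : Subgroup G) : Prop :=
  H ⊓ ⁅H, (⊤ : Subgroup G)⁆ ≤ (frattini ↥H).map H.subtype

open scoped commutatorElement in
/-- `[H, G]` is normal in `G`. -/
theorem commutator_top_normal {G : Type*} [Group G] (H : Subgroup G) :
    (⁅H, (⊤ : Subgroup G)⁆).Normal := by
  constructor
  intro n hn g
  rw [Subgroup.commutator_def] at hn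
  induction hn using Subgroup.closure_induction with
  | mem x hx =>
      obtain ⟨h, hh, c, -, rfl⟩ := hx
      have key : g * ⁅h, c⁆ * g⁻¹ = ⁅h, g⁆⁻¹ * ⁅h, g * c⁆ := by
        simp only [commutatorElement_def]; group
      rw [key]
      exact Subgroup.mul_mem _
        (Subgroup.inv_mem _ (Subgroup.commutator_mem_commutator hh (Subgroup.mem_top g)))
        (Subgroup.commutator_mem_commutator hh (Subgroup.mem_top (g * c)))
  | one => simpa using Subgroup.one_mem _
  | mul x y _ _ hx hy =>
      have : g * (x * y) * g⁻¹ = (g * x * g⁻¹) * (g * y * g⁻¹) := by group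
      rw [this]; exact Subgroup.mul_mem _ hx hy
  | inv x _ hx =>
      have : g * x⁻¹ * g⁻¹ = (g * x * g⁻¹)⁻¹ := by group
      rw [this]; exact Subgroup.inv_mem _ hx

theorem stmt0 {G : Type*} [Group G] [Finite G] (H : Subgroup G)
    (hbot : H ≠ ⊥) (htop : H ≠ ⊤) (hIC : IsICPhi H) : ¬ IsSimpleGroup G := by
  intro hs
  rcases (commutator_top_normal H).eq_bot_or_eq_top with hN | hN
  · -- H is central, hence normal, contradicting simplicity
    have hc : H ≤ Subgroup.centralizer (⊤ : Subgroup G) :=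
      Subgroup.commutator_eq_bot_iff_le_centralizer.mp hN
    have hz : H ≤ Subgroup.center G := by
      intro x hx
      rw [Subgroup.mem_center_iff]
      intro g
      exact (Subgroup.mem_centralizer_iff.mp (hc hx)) g (Subgroup.mem_top g)
    have : H.Normal := by
      constructor
      intro n hn g
      have : g * n * g⁻¹ = n := by
        have := (Subgroup.mem_center_iff.mp (hz hn)) g
        group
        rw [this]
        group
      rw [this]; exact hn
    rcases this.eq_bot_or_eq_top with h | h
    · exact hbot h
    · exact htop h
  · -- [H,G] = ⊤, so H ≤ Φ(H), so Φ(H) = ⊤, impossible for a nontrivial finite group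
    have hle : H ≤ (frattini ↥H).map H.subtype := by
      intro x hx
      refine hIC ⟨hx, ?_⟩
      rw [hN]; trivial
    have hfr : frattini ↥H = ⊤ := by
      rw [eq_top_iff]
      rintro ⟨x, hx⟩ -
      obtain ⟨y, hy, hyx⟩ := hle hx
      have : y = ⟨x, hx⟩ := Subtype.ext hyx
      exact this ▸ hy
    -- ↥H is a nontrivial finite group, so Subgroup ↥H has a coatom below ⊤
    have hnt : Nontrivial ↥H := by
      rcases H.bot_or_nontrivial with h | h
      · exact absurd h hbot
      · exact h
    have hbt : (⊥ : Subgroup ↥H) ≠ ⊤ := by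
      intro h
      obtain ⟨x, hx⟩ := exists_ne (1 : ↥H)
      exact hx (Subgroup.mem_bot.mp (h ▸ Subgroup.mem_top x))
    obtain ⟨M, hMc, -⟩ :=
      (IsCoatomic.eq_top_or_exists_le_coatom (⊥ : Subgroup ↥H)).resolve_left hbt
    exact hMc.1 (le_antisymm le_top (hfr ▸ frattini_le_coatom hMc))
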